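/- Let d: X × X̂ → [0, d*] be a distortion measure on finite alphabets such that for each x ∈ X there exists x̂ ∈ X̂ with d(x,x̂) = 0, and let d̃ be the minimum nonzero value of d. Then for all probability distributions p, q on X with ||p-q||_1 ≤ d̃/(4d*) and all D ≥ 0: |R(p,D) - R(q,D)| ≤ (7d*/d̃) · ||p-q||_1 · ln(|X|·|X̂| / ||p-q||_1). -/

import Mathlib

open BigOperators Finset Real

def IsPMF {X : Type*} [Fintype X] (p : X → ℝ) : Prop :=
  (∀ x, 0 ≤ p x) ∧ ∑ x, p x = 1

def IsChannel {X Xh : Type*} [Fintype X] [Fintype Xh] (W : X → Xh → ℝ) : Prop :=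
  (∀ x y, 0 ≤ W x y) ∧ ∀ x, ∑ y, W x y = 1

noncomputable def avgDist {X Xh : Type*} [Fintype X] [Fintype Xh]
    (d : X → Xh → ℝ) (p : X → ℝ) (W : X → Xh → ℝ) : ℝ :=
  ∑ x, ∑ y, p x * W x y * d x y

noncomputable def ent {α : Type*} [Fintype α] (p : α → ℝ) : ℝ :=
  -∑ a, p a * Real.log (p a)

noncomputable def mutInfo {X Xh : Type*} [Fintype X] [Fintype Xh]
    (p : X → ℝ) (W : X → Xh → ℝ) : ℝ :=
  ent p + ent (fun y => ∑ x, p x * W x y) - ent (fun z : X × Xh => p z.1 * W z.1 z.2)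

/-- The IID rate-distortion function `R(p, D)` (in nats). -/
noncomputable def RD {X Xh : Type*} [Fintype X] [Fintype Xh]
    (d : X → Xh → ℝ) (p : X → ℝ) (D : ℝ) : ℝ :=
  sInf {r | ∃ W : X → Xh → ℝ, IsChannel W ∧ avgDist d p W ≤ D ∧ r = mutInfo p W}

-- Gibbs inequality
lemma gibbs {α : Type*} [Fintype α] (p q : α → ℝ) (hp : ∀ a, 0 ≤ p a) (hq : ∀ a, 0 ≤ q a)
    (hsupp : ∀ a, q a = 0 → p a = 0) (hqs : ∑ a, q a ≤ ∑ a, p a) :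
    ∑ a, p a * Real.log (q a) ≤ ∑ a, p a * Real.log (p a) := by
  have key : ∀ a, p a * Real.log (q a) - p a * Real.log (p a) ≤ q a - p a := by
    intro a
    rcases eq_or_lt_of_le (hp a) with h0 | hpa
    · simp [← h0]; exact hq a
    · have hqa : 0 < q a := lt_of_le_of_ne (hq a) (fun h => by
        have := hsupp a h.symm; exact absurd this (ne_of_gt hpa))
      have hlog : Real.log (q a / p a) ≤ q a / p a - 1 :=
        Real.log_le_sub_one_of_pos (div_pos hqa hpa)
      have : Real.log (q a) - Real.log (p a) ≤ q a / p a - 1 := by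
        rwa [Real.log_div (ne_of_gt hqa) (ne_of_gt hpa)] at hlog
      calc p a * Real.log (q a) - p a * Real.log (p a)
          = p a * (Real.log (q a) - Real.log (p a)) := by ring
        _ ≤ p a * (q a / p a - 1) := by
            exact mul_le_mul_of_nonneg_left this (le_of_lt hpa)
        _ = q a - p a := by field_simp
  have h2 : ∑ a, (p a * Real.log (q a) - p a * Real.log (p a)) ≤ ∑ a, (q a - p a) :=
    Finset.sum_le_sum (fun a _ => key a)
  rw [Finset.sum_sub_distrib, Finset.sum_sub_distrib] at h2
  linarith

lemma mul_log_div_mono {a b N : ℝ} (ha : 0 < a) (hab : a ≤ b) (hbN : Real.exp 1 * b ≤ N) :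
    a * Real.log (N / a) ≤ b * Real.log (N / b) := by
  have hb : 0 < b := lt_of_lt_of_le ha hab
  have hN : 0 < N := lt_of_lt_of_le (by positivity) hbN
  have h1 : (1:ℝ) ≤ Real.log (N / b) := by
    rw [Real.le_log_iff_exp_le (by positivity), le_div_iff₀ hb]
    exact hbN
  have hsplit : Real.log (N / a) = Real.log (N / b) + Real.log (b / a) := by
    rw [← Real.log_mul (by positivity) (by positivity)]
    congr 1
    field_simp
  have h2 : Real.log (b / a) ≤ b / a - 1 := Real.log_le_sub_one_of_pos (by positivity)
  have h3 : a * Real.log (b / a) ≤ b - a := by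
    have := mul_le_mul_of_nonneg_left h2 ha.le
    calc a * Real.log (b/a) ≤ a * (b/a - 1) := this
      _ = b - a := by field_simp
  calc a * Real.log (N/a) = a * Real.log (N/b) + a * Real.log (b/a) := by rw [hsplit]; ring
    _ ≤ a * Real.log (N/b) + (b - a) := by linarith
    _ ≤ a * Real.log (N/b) + (b - a) * Real.log (N/b) := by nlinarith
    _ = b * Real.log (N/b) := by ring


lemma sum_negMulLog_le {α : Type*} [Fintype α] (ε : α → ℝ) (hε : ∀ a, 0 ≤ ε a)
    (hs : 0 < ∑ a, ε a) :
    ∑ a, Real.negMulLog (ε a) ≤ (∑ a, ε a) * Real.log ((Fintype.card α : ℝ) / ∑ a, ε a) := by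
  set s := ∑ a, ε a with hsdef
  have hne : Nonempty α := by
    by_contra h
    rw [not_nonempty_iff] at h
    rw [hsdef, Finset.sum_eq_zero (fun a _ => (h.elim a))] at hs
    exact lt_irrefl 0 hs
  have hcard : 0 < (Fintype.card α : ℝ) := by
    have := Fintype.card_pos (α := α); positivity
  have hg := gibbs (fun a => ε a / s) (fun _ => 1 / (Fintype.card α : ℝ))
    (fun a => div_nonneg (hε a) hs.le) (fun a => by positivity)
    (fun a h => absurd h (ne_of_gt (by positivity)))
    (by
      have h1 : ∑ _a : α, 1 / (Fintype.card α : ℝ) = 1 := by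
        rw [Finset.sum_const, Finset.card_univ, nsmul_eq_mul, mul_one_div,
          div_self (ne_of_gt hcard)]
      have h2 : ∑ a, ε a / s = 1 := by
        rw [← Finset.sum_div, ← hsdef, div_self (ne_of_gt hs)]
      rw [h1, h2])
  have hL : ∑ a, (ε a / s) * Real.log (1 / (Fintype.card α : ℝ)) = - Real.log (Fintype.card α) := by
    rw [← Finset.sum_mul, ← Finset.sum_div, ← hsdef, div_self (ne_of_gt hs), one_mul,
      Real.log_div one_ne_zero (ne_of_gt hcard), Real.log_one]
    ring
  have hR : ∑ a, (ε a / s) * Real.log (ε a / s)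
      = (∑ a, ε a * Real.log (ε a)) / s - Real.log s := by
    have : ∀ a, (ε a / s) * Real.log (ε a / s) = (ε a * Real.log (ε a)) / s - (ε a / s) * Real.log s := by
      intro a
      rcases eq_or_lt_of_le (hε a) with h0 | h0
      · rw [← h0]; simp
      · rw [Real.log_div (ne_of_gt h0) (ne_of_gt hs)]; ring
    rw [Finset.sum_congr rfl (fun a _ => this a), Finset.sum_sub_distrib, ← Finset.sum_div,
      ← Finset.sum_mul, ← Finset.sum_div, ← hsdef, div_self (ne_of_gt hs), one_mul]
  rw [hL, hR] at hg
  have hη : ∑ a, Real.negMulLog (ε a) = - ∑ a, ε a * Real.log (ε a) := by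
    simp [Real.negMulLog, Finset.sum_neg_distrib]
  rw [hη, Real.log_div (ne_of_gt hcard) (ne_of_gt hs)]
  have hmul := mul_le_mul_of_nonneg_left hg hs.le
  have key : s * ((∑ a, ε a * Real.log (ε a))/s - Real.log s)
      = (∑ a, ε a * Real.log (ε a)) - s * Real.log s := by
    field_simp
  rw [key] at hmul
  linarith

-- (iib): η(1-u) ≤ η(u) for 0 ≤ u ≤ 1/2
lemma eta_one_sub {u : ℝ} (h0 : 0 ≤ u) (h2 : u ≤ 1/2) :
    Real.negMulLog (1 - u) ≤ Real.negMulLog u := by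
  rcases le_or_gt u (1/3) with h3 | h3
  · -- elementary
    rcases eq_or_lt_of_le h0 with rfl | hu
    · norm_num
    · have hu1 : (0:ℝ) < 1 - u := by linarith
      have hlow : Real.negMulLog (1 - u) ≤ u := by
        have hlog : Real.log ((1-u)⁻¹) ≤ (1-u)⁻¹ - 1 :=
          Real.log_le_sub_one_of_pos (by positivity)
        rw [Real.log_inv] at hlog
        have : -Real.log (1-u) ≤ u / (1-u) := by
          rw [inv_eq_one_div] at hlog
          have : (1:ℝ)/(1-u) - 1 = u / (1-u) := by field_simp; ring
          linarith
        have := mul_le_mul_of_nonneg_left this hu1.le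
        rw [Real.negMulLog]
        calc -(1-u) * Real.log (1-u) = (1-u) * (-Real.log (1-u)) := by ring
          _ ≤ (1-u) * (u / (1-u)) := this
          _ = u := by field_simp
      have hhigh : u ≤ Real.negMulLog u := by
        rw [Real.negMulLog]
        have hlog1 : (1:ℝ) ≤ Real.log u⁻¹ := by
          rw [Real.le_log_iff_exp_le (by positivity)]
          have h9 : Real.exp 1 < 2.7182818286 := Real.exp_one_lt_d9
          have : (2.7182818286 : ℝ) ≤ u⁻¹ := by
            rw [le_inv_comm₀] <;> try positivity
            · linarith
          linarith
        rw [Real.log_inv] at hlog1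
        nlinarith
      linarith
  · -- calculus on [1/3, 1/2]
    set g : ℝ → ℝ := fun t => Real.negMulLog t - Real.negMulLog (1 - t) with hg
    have hderiv : ∀ t ∈ interior (Set.Icc (1/3 : ℝ) (1/2)), deriv g t < 0 := by
      intro t ht
      rw [interior_Icc, Set.mem_Ioo] at ht
      have ht0 : t ≠ 0 := by intro h; rw [h] at ht; norm_num at ht
      have ht1 : (1:ℝ) - t ≠ 0 := by intro h; linarith [ht.2]
      have h1 : HasDerivAt (fun t : ℝ => Real.negMulLog (1 - t))
          ((-Real.log (1 - t) - 1) * (-1)) t :=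
        (Real.hasDerivAt_negMulLog ht1).comp t ((hasDerivAt_id t).const_sub 1)
      have h2 : HasDerivAt g ((-Real.log t - 1) - (-Real.log (1 - t) - 1) * (-1)) t :=
        (Real.hasDerivAt_negMulLog ht0).sub h1
      rw [h2.deriv]
      have hprod : (2:ℝ)/9 ≤ t * (1 - t) := by nlinarith [ht.1, ht.2]
      have hexp : Real.exp (-2) < t * (1 - t) := by
        have hpos : 0 < Real.exp 1 := Real.exp_pos 1
        have hgt : (2.7182818283:ℝ) < Real.exp 1 := Real.exp_one_gt_d9
        have heq : Real.exp (-2) = 1 / (Real.exp 1 * Real.exp 1) := by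
          rw [show (-2:ℝ) = -(1+1) by norm_num, Real.exp_neg, Real.exp_add]
          rw [inv_eq_one_div]
        rw [heq]
        have hsq : Real.exp 1 * Real.exp 1 > 4.5 := by nlinarith
        have : 1 / (Real.exp 1 * Real.exp 1) < 2/9 := by
          rw [div_lt_div_iff₀] <;> nlinarith
        linarith
      have hlogge : -2 < Real.log (t * (1 - t)) := by
        rw [← Real.log_exp (-2)]
        exact Real.log_lt_log (Real.exp_pos _) hexp
      have hlm : Real.log (t * (1 - t)) = Real.log t + Real.log (1 - t) :=
        Real.log_mul ht0 ht1
      rw [hlm] at hlogge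
      nlinarith [hlogge]
    have hcont : ContinuousOn g (Set.Icc (1/3 : ℝ) (1/2)) := by
      apply Continuous.continuousOn
      exact Real.continuous_negMulLog.sub (Real.continuous_negMulLog.comp (continuous_const.sub continuous_id))
    have hanti : StrictAntiOn g (Set.Icc (1/3 : ℝ) (1/2)) :=
      strictAntiOn_of_deriv_neg (convex_Icc _ _) hcont hderiv
    have hmem_u : u ∈ Set.Icc (1/3 : ℝ) (1/2) := ⟨h3.le, h2⟩
    have hmem_half : (1/2 : ℝ) ∈ Set.Icc (1/3 : ℝ) (1/2) := by norm_num
    have hghalf : g (1/2) = 0 := by norm_num [hg]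
    rcases eq_or_lt_of_le h2 with rfl | hlt
    · norm_num
    · have hgt := hanti hmem_u hmem_half hlt
      rw [hghalf] at hgt
      have hgu : 0 < Real.negMulLog u - Real.negMulLog (1 - u) := hgt
      linarith

-- one-sided, x ≤ y
lemma eta_diff_aux {x y : ℝ} (hx0 : 0 ≤ x) (hy1 : y ≤ 1) (hxy : x ≤ y) (hu : y - x ≤ 1/2) :
    |Real.negMulLog x - Real.negMulLog y| ≤ Real.negMulLog (y - x) := by
  set u := y - x with hudef
  have hu0 : 0 ≤ u := by linarith
  have hx1 : x ≤ 1 := by linarith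
  have hy0 : 0 ≤ y := by linarith
  rw [abs_le]
  constructor
  · -- η y - η x ≤ η u  (subadditivity)
    have hsub : Real.negMulLog y ≤ Real.negMulLog x + Real.negMulLog u := by
      have hyeq : y = x + u := by rw [hudef]; ring
      have h1 : x * Real.log x ≤ x * Real.log y := by
        rcases eq_or_lt_of_le hx0 with h | h
        · rw [← h]; simp
        · have hylt : 0 < y := lt_of_lt_of_le h hxy
          exact mul_le_mul_of_nonneg_left (Real.log_le_log (by linarith) hxy) h.le
      have h2 : u * Real.log u ≤ u * Real.log y := by
        rcases eq_or_lt_of_le hu0 with h | h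
        · rw [← h]; simp
        · have hylt : 0 < y := by linarith
          exact mul_le_mul_of_nonneg_left (Real.log_le_log h (by linarith)) h.le
      have hyy : -y * Real.log y = -x * Real.log y - u * Real.log y := by
        rw [hyeq]; ring
      simp only [Real.negMulLog]
      rw [hyy]
      linarith
    linarith
  · -- η x - η y ≤ η u  via concavity and eta_one_sub
    have key : Real.negMulLog x ≤ Real.negMulLog y + Real.negMulLog (1 - u) := by
      rcases eq_or_lt_of_le hx1 with h | hxlt1
      · -- x = 1, so y = 1, u = 0
        have hy1' : y = 1 := le_antisymm hy1 (by linarith [hxy, h])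
        have hu0' : u = 0 := by rw [hudef, hy1', ← h]; ring
        rw [hu0', ← h, hy1']
        simp
      · set l := u / (1 - x) with hldef
        have h1x : 0 < 1 - x := by linarith
        have hl0 : 0 ≤ l := by positivity
        have hl1 : l ≤ 1 := by
          rw [hldef, div_le_one h1x]; linarith
        have hcomb1 : (1 - l) * x + l * 1 = y := by
          rw [hldef]; field_simp; ring
        have hcomb2 : l * x + (1 - l) * 1 = 1 - u := by
          rw [hldef]; field_simp; ring
        have hcc := Real.concaveOn_negMulLog.2 (Set.mem_Ici.mpr hx0)
          (Set.mem_Ici.mpr zero_le_one) (by linarith : (0:ℝ) ≤ 1 - l) hl0 (by ring)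
        rw [smul_eq_mul, smul_eq_mul, smul_eq_mul, smul_eq_mul, hcomb1] at hcc
        have hcc2 := Real.concaveOn_negMulLog.2 (Set.mem_Ici.mpr hx0)
          (Set.mem_Ici.mpr zero_le_one) hl0 (by linarith : (0:ℝ) ≤ 1 - l) (by ring)
        rw [smul_eq_mul, smul_eq_mul, smul_eq_mul, smul_eq_mul, hcomb2] at hcc2
        have h1 : Real.negMulLog 1 = 0 := Real.negMulLog_one
        rw [h1] at hcc hcc2
        nlinarith [hcc, hcc2]
    have := eta_one_sub hu0 hu
    linarith

lemma eta_diff {x y : ℝ} (hx0 : 0 ≤ x) (hx1 : x ≤ 1) (hy0 : 0 ≤ y) (hy1 : y ≤ 1)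
    (h : |x - y| ≤ 1/2) : |Real.negMulLog x - Real.negMulLog y| ≤ Real.negMulLog |x - y| := by
  rcases le_total x y with hxy | hxy
  · have : |x - y| = y - x := by rw [abs_sub_comm, abs_of_nonneg (by linarith)]
    rw [this] at h ⊢
    exact eta_diff_aux hx0 hy1 hxy h
  · have : |x - y| = x - y := abs_of_nonneg (by linarith)
    rw [this] at h ⊢
    rw [abs_sub_comm]
    exact eta_diff_aux hy0 hx1 hxy h

lemma ent_eq {α : Type*} [Fintype α] (p : α → ℝ) :
    ent p = ∑ a, Real.negMulLog (p a) := by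
  rw [ent, ← Finset.sum_neg_distrib]
  congr 1; funext a; rw [Real.negMulLog]; ring

lemma fannes {α : Type*} [Fintype α] (a b : α → ℝ) {s : ℝ}
    (ha0 : ∀ z, 0 ≤ a z) (ha1 : ∑ z, a z = 1)
    (hb0 : ∀ z, 0 ≤ b z) (hb1 : ∑ z, b z = 1)
    (hTV : ∑ z, |a z - b z| ≤ s) (hs0 : 0 < s) (hs2 : s ≤ 1/2) :
    |ent a - ent b| ≤ s * Real.log ((Fintype.card α : ℝ) / s) := by
  have hne : Nonempty α := by
    by_contra h
    rw [not_nonempty_iff] at h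
    rw [Finset.sum_eq_zero (fun z _ => (h.elim z))] at ha1
    norm_num at ha1
  have hcard1 : (1:ℝ) ≤ (Fintype.card α : ℝ) := by
    have := Fintype.card_pos (α := α)
    exact_mod_cast this
  have hle1 : ∀ (f : α → ℝ), (∀ z, 0 ≤ f z) → ∑ z, f z = 1 → ∀ z, f z ≤ 1 := by
    intro f hf0 hf1 z
    rw [← hf1]
    exact Finset.single_le_sum (fun w _ => hf0 w) (Finset.mem_univ z)
  have hper : ∀ z, |a z - b z| ≤ 1/2 := by
    intro z
    calc |a z - b z| ≤ ∑ w, |a w - b w| :=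
          Finset.single_le_sum (f := fun w => |a w - b w|) (fun w _ => abs_nonneg _)
            (Finset.mem_univ z)
      _ ≤ s := hTV
      _ ≤ 1/2 := hs2
  have step1 : |ent a - ent b| ≤ ∑ z, Real.negMulLog |a z - b z| := by
    rw [ent_eq, ent_eq, ← Finset.sum_sub_distrib]
    calc |∑ z, (Real.negMulLog (a z) - Real.negMulLog (b z))|
        ≤ ∑ z, |Real.negMulLog (a z) - Real.negMulLog (b z)| :=
          Finset.abs_sum_le_sum_abs _ _
      _ ≤ ∑ z, Real.negMulLog |a z - b z| :=
          Finset.sum_le_sum (fun z _ => eta_diff (ha0 z) (hle1 a ha0 ha1 z)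
            (hb0 z) (hle1 b hb0 hb1 z) (hper z))
  set s' := ∑ z, |a z - b z| with hs'def
  have hs'0 : 0 ≤ s' := Finset.sum_nonneg (fun z _ => abs_nonneg _)
  rcases eq_or_lt_of_le hs'0 with hz | hz
  · -- s' = 0
    have : ∀ z, Real.negMulLog |a z - b z| = 0 := by
      intro z
      have : |a z - b z| = 0 := by
        have h0 := (Finset.sum_eq_zero_iff_of_nonneg
          (s := Finset.univ) (f := fun w => |a w - b w|)
          (fun w _ => abs_nonneg (a w - b w))).mp (by rw [← hs'def]; exact hz.symm)
        exact h0 z (Finset.mem_univ z)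
      rw [this, Real.negMulLog_zero]
    have hsum0 : ∑ z, Real.negMulLog |a z - b z| = 0 := Finset.sum_eq_zero (fun z _ => this z)
    rw [hsum0] at step1
    have : (0:ℝ) ≤ s * Real.log ((Fintype.card α : ℝ) / s) := by
      apply mul_nonneg hs0.le
      apply Real.log_nonneg
      rw [le_div_iff₀ hs0]
      linarith
    linarith
  · -- s' > 0
    have hcard2 : (2:ℝ) ≤ (Fintype.card α : ℝ) := by
      by_contra hlt
      push_neg at hlt
      have h1 : Fintype.card α = 1 := by
        have := Fintype.card_pos (α := α)
        have : Fintype.card α < 2 := by exact_mod_cast hlt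
        omega
      obtain ⟨x0, hx0⟩ := Fintype.card_eq_one_iff.mp h1
      have huniv : (Finset.univ : Finset α) = {x0} :=
        Finset.eq_singleton_iff_unique_mem.mpr ⟨Finset.mem_univ x0, fun w _ => hx0 w⟩
      rw [hs'def, huniv, Finset.sum_singleton] at hz
      rw [huniv, Finset.sum_singleton] at ha1 hb1
      rw [ha1, hb1] at hz
      norm_num at hz
    have step2 : ∑ z, Real.negMulLog |a z - b z| ≤ s' * Real.log ((Fintype.card α : ℝ) / s') :=
      sum_negMulLog_le _ (fun z => abs_nonneg _) hz
    have step3 : s' * Real.log ((Fintype.card α : ℝ) / s') ≤ s * Real.log ((Fintype.card α : ℝ) / s) := by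
      apply mul_log_div_mono hz hTV
      have hexp : Real.exp 1 < 2.7182818286 := Real.exp_one_lt_d9
      nlinarith
    linarith

section PMF
variable {X Xh : Type*} [Fintype X] [Fintype Xh] {p : X → ℝ} {W : X → Xh → ℝ}

lemma marg_pmf (hp : IsPMF p) (hW : IsChannel W) :
    IsPMF (fun y => ∑ x, p x * W x y) := by
  constructor
  · intro y
    exact Finset.sum_nonneg (fun x _ => mul_nonneg (hp.1 x) (hW.1 x y))
  · rw [Finset.sum_comm]
    calc ∑ x, ∑ y, p x * W x y = ∑ x, p x * ∑ y, W x y := by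
          congr 1; funext x; rw [Finset.mul_sum]
      _ = ∑ x, p x := by
          congr 1; funext x; rw [hW.2 x, mul_one]
      _ = 1 := hp.2

lemma joint_pmf (hp : IsPMF p) (hW : IsChannel W) :
    IsPMF (fun z : X × Xh => p z.1 * W z.1 z.2) := by
  constructor
  · intro z; exact mul_nonneg (hp.1 z.1) (hW.1 z.1 z.2)
  · rw [Fintype.sum_prod_type]
    calc ∑ x, ∑ y, p x * W x y = ∑ x, p x * ∑ y, W x y := by
          congr 1; funext x; rw [Finset.mul_sum]
      _ = ∑ x, p x := by congr 1; funext x; rw [hW.2 x, mul_one]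
      _ = 1 := hp.2

lemma mutInfo_nonneg (hp : IsPMF p) (hW : IsChannel W) : 0 ≤ mutInfo p W := by
  set m : Xh → ℝ := fun y => ∑ x, p x * W x y with hm
  set j : X × Xh → ℝ := fun z => p z.1 * W z.1 z.2 with hj
  have hmp : IsPMF m := marg_pmf hp hW
  have hjp : IsPMF j := joint_pmf hp hW
  have hident : ent p + ent m = -∑ z : X × Xh, j z * Real.log (p z.1 * m z.2) := by
    have h1 : ∑ x, p x * Real.log (p x) = ∑ z : X × Xh, j z * Real.log (p z.1) := by
      rw [Fintype.sum_prod_type]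
      congr 1; funext x
      show p x * Real.log (p x) = ∑ y, j (x, y) * Real.log (p x)
      rw [← Finset.sum_mul]
      have hjs : ∑ y, j (x, y) = p x := by
        simp only [hj]
        rw [← Finset.mul_sum, hW.2 x, mul_one]
      rw [hjs]
    have h2 : ∑ y, m y * Real.log (m y) = ∑ z : X × Xh, j z * Real.log (m z.2) := by
      rw [Fintype.sum_prod_type, Finset.sum_comm]
      congr 1; funext y
      rw [hm, Finset.sum_mul]
    have h3 : ∀ z : X × Xh, j z * Real.log (p z.1) + j z * Real.log (m z.2)
        = j z * Real.log (p z.1 * m z.2) := by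
      intro z
      rcases eq_or_ne (j z) 0 with h | h
      · rw [h]; ring
      · have hpz : p z.1 ≠ 0 := by
          intro h0; apply h; rw [hj]; simp only; rw [h0, zero_mul]
        have hmz : m z.2 ≠ 0 := by
          intro h0
          apply h
          have hall := (Finset.sum_eq_zero_iff_of_nonneg
            (s := Finset.univ) (f := fun x => p x * W x z.2)
            (fun x _ => mul_nonneg (hp.1 x) (hW.1 x z.2))).mp h0
          exact hall z.1 (Finset.mem_univ z.1)
        rw [Real.log_mul hpz hmz]; ring
    rw [ent, ent, ← Finset.sum_congr rfl (fun z _ => h3 z)]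
    rw [Finset.sum_add_distrib, h1, h2]
    ring
  have hgibbs : ∑ z : X × Xh, j z * Real.log (p z.1 * m z.2) ≤ ∑ z, j z * Real.log (j z) := by
    apply gibbs _ _ hjp.1 (fun z => mul_nonneg (hp.1 z.1) (hmp.1 z.2))
    · intro z h0
      rcases mul_eq_zero.mp h0 with h | h
      · rw [hj]; simp only; rw [h, zero_mul]
      · have hall := (Finset.sum_eq_zero_iff_of_nonneg
          (s := Finset.univ) (f := fun x => p x * W x z.2)
          (fun x _ => mul_nonneg (hp.1 x) (hW.1 x z.2))).mp h
        exact hall z.1 (Finset.mem_univ z.1)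
    · have hqsum : ∑ z : X × Xh, p z.1 * m z.2 = 1 := by
        rw [Fintype.sum_prod_type]
        have : ∑ x, ∑ y, p x * m y = (∑ x, p x) * (∑ y, m y) := by
          rw [Finset.sum_mul_sum]
        rw [this, hp.2, hmp.2, mul_one]
      rw [hqsum, hjp.2]
  rw [mutInfo, ← hm, ← hj]
  rw [hident, ent]
  linarith

end PMF

section Cont
variable {X Xh : Type*} [Fintype X] [Fintype Xh]

lemma card_prod_real (X Xh : Type*) [Fintype X] [Fintype Xh] :
    (Fintype.card (X × Xh) : ℝ) = (Fintype.card X : ℝ) * (Fintype.card Xh : ℝ) := by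
  rw [Fintype.card_prod]; push_cast; ring

-- continuity in p
lemma mutInfo_cont_p {p q : X → ℝ} {W : X → Xh → ℝ} {s : ℝ}
    (hp : IsPMF p) (hq : IsPMF q) (hW : IsChannel W)
    (hTV : ∑ x, |p x - q x| ≤ s) (hs0 : 0 < s) (hs2 : s ≤ 1/2) :
    |mutInfo p W - mutInfo q W| ≤
      s * Real.log ((Fintype.card X : ℝ) / s) + s * Real.log ((Fintype.card Xh : ℝ) / s)
      + s * Real.log ((Fintype.card X : ℝ) * (Fintype.card Xh : ℝ) / s) := by
  have hmargTV : ∑ y, |(∑ x, p x * W x y) - (∑ x, q x * W x y)| ≤ s := by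
    calc ∑ y, |(∑ x, p x * W x y) - (∑ x, q x * W x y)|
        = ∑ y, |∑ x, (p x - q x) * W x y| := by
          congr 1; funext y; rw [← Finset.sum_sub_distrib]
          congr 1
          exact Finset.sum_congr rfl (fun x _ => by ring)
      _ ≤ ∑ y, ∑ x, |(p x - q x) * W x y| :=
          Finset.sum_le_sum (fun y _ => Finset.abs_sum_le_sum_abs _ _)
      _ = ∑ x, |p x - q x| * ∑ y, W x y := by
          rw [Finset.sum_comm]
          congr 1; funext x
          rw [Finset.mul_sum]
          congr 1; funext y
          rw [abs_mul, abs_of_nonneg (hW.1 x y)]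
      _ = ∑ x, |p x - q x| := by
          congr 1; funext x; rw [hW.2 x, mul_one]
      _ ≤ s := hTV
  have hjointTV : ∑ z : X × Xh, |p z.1 * W z.1 z.2 - q z.1 * W z.1 z.2| ≤ s := by
    calc ∑ z : X × Xh, |p z.1 * W z.1 z.2 - q z.1 * W z.1 z.2|
        = ∑ x, ∑ y, |p x - q x| * W x y := by
          rw [Fintype.sum_prod_type]
          congr 1; funext x; congr 1; funext y
          rw [show p x * W x y - q x * W x y = (p x - q x) * W x y by ring,
            abs_mul, abs_of_nonneg (hW.1 x y)]
      _ = ∑ x, |p x - q x| := by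
          congr 1; funext x; rw [← Finset.mul_sum, hW.2 x, mul_one]
      _ ≤ s := hTV
  have f1 := fannes p q hp.1 hp.2 hq.1 hq.2 hTV hs0 hs2
  have f2 := fannes _ _ (marg_pmf hp hW).1 (marg_pmf hp hW).2
    (marg_pmf hq hW).1 (marg_pmf hq hW).2 hmargTV hs0 hs2
  have f3 := fannes _ _ (joint_pmf hp hW).1 (joint_pmf hp hW).2
    (joint_pmf hq hW).1 (joint_pmf hq hW).2 hjointTV hs0 hs2
  rw [card_prod_real X Xh] at f3
  have habs : ∀ A B C A' B' C' : ℝ,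
      |A + B - C - (A' + B' - C')| ≤ |A - A'| + |B - B'| + |C - C'| := by
    intro A B C A' B' C'
    rw [show A + B - C - (A' + B' - C') = (A - A') + (B - B') + -(C - C') by ring]
    calc |(A - A') + (B - B') + -(C - C')| ≤ |(A - A') + (B - B')| + |-(C - C')| := abs_add_le _ _
      _ ≤ |A - A'| + |B - B'| + |C - C'| := by
          rw [abs_neg]; linarith [abs_add_le (A - A') (B - B')]
  rw [mutInfo, mutInfo]
  exact le_trans (habs _ _ _ _ _ _) (by linarith [f1, f2, f3])
end Cont

lemma mutInfo_cont_W {X Xh : Type*} [Fintype X] [Fintype Xh]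
    {p : X → ℝ} {W W' : X → Xh → ℝ} {s : ℝ}
    (hp : IsPMF p) (hW : IsChannel W) (hW' : IsChannel W')
    (hTV : ∑ z : X × Xh, |p z.1 * W' z.1 z.2 - p z.1 * W z.1 z.2| ≤ s)
    (hs0 : 0 < s) (hs2 : s ≤ 1/2) :
    |mutInfo p W' - mutInfo p W| ≤
      s * Real.log ((Fintype.card Xh : ℝ) / s)
      + s * Real.log ((Fintype.card X : ℝ) * (Fintype.card Xh : ℝ) / s) := by
  have hmargTV : ∑ y, |(∑ x, p x * W' x y) - (∑ x, p x * W x y)| ≤ s := by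
    calc ∑ y, |(∑ x, p x * W' x y) - (∑ x, p x * W x y)|
        = ∑ y, |∑ x, (p x * W' x y - p x * W x y)| := by
          congr 1; funext y; rw [← Finset.sum_sub_distrib]
      _ ≤ ∑ y, ∑ x, |p x * W' x y - p x * W x y| :=
          Finset.sum_le_sum (fun y _ => Finset.abs_sum_le_sum_abs _ _)
      _ = ∑ z : X × Xh, |p z.1 * W' z.1 z.2 - p z.1 * W z.1 z.2| := by
          rw [Fintype.sum_prod_type, Finset.sum_comm]
      _ ≤ s := hTV
  have f2 := fannes _ _ (marg_pmf hp hW').1 (marg_pmf hp hW').2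
    (marg_pmf hp hW).1 (marg_pmf hp hW).2 hmargTV hs0 hs2
  have f3 := fannes _ _ (joint_pmf hp hW').1 (joint_pmf hp hW').2
    (joint_pmf hp hW).1 (joint_pmf hp hW).2 hTV hs0 hs2
  rw [card_prod_real X Xh] at f3
  have habs : ∀ B C B' C' : ℝ,
      |(0 : ℝ) + B - C - ((0:ℝ) + B' - C')| ≤ |B - B'| + |C - C'| := by
    intro B C B' C'
    rw [show (0:ℝ) + B - C - ((0:ℝ) + B' - C') = (B - B') + -(C - C') by ring]
    calc |(B - B') + -(C - C')| ≤ |B - B'| + |-(C - C')| := abs_add_le _ _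
      _ = |B - B'| + |C - C'| := by rw [abs_neg]
  have key : mutInfo p W' - mutInfo p W
      = 0 + ent (fun y => ∑ x, p x * W' x y) - ent (fun z : X × Xh => p z.1 * W' z.1 z.2)
      - (0 + ent (fun y => ∑ x, p x * W x y) - ent (fun z : X × Xh => p z.1 * W z.1 z.2)) := by
    rw [mutInfo, mutInfo]; ring
  rw [key]
  exact le_trans (habs _ _ _ _) (by linarith [f2, f3])

lemma construct {X Xh : Type*} [Fintype X] [Fintype Xh]
    (d : X → Xh → ℝ) (dstar dtil : ℝ)
    (hd0 : ∀ x y, 0 ≤ d x y) (hdstar : ∀ x y, d x y ≤ dstar)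
    (hzero : ∀ x, ∃ y, d x y = 0)
    (hdtil_pos : 0 < dtil) (hdtil : ∀ x y, d x y ≠ 0 → dtil ≤ d x y)
    (p q : X → ℝ) (hp : IsPMF p) (hq : IsPMF q)
    (D : ℝ) (hD : 0 ≤ D) (W : X → Xh → ℝ) (hW : IsChannel W)
    (hfeas : avgDist d q W ≤ D)
    (ht0 : 0 < ∑ x, |p x - q x|) (hdstar_pos : 0 < dstar) :
    ∃ W' : X → Xh → ℝ, IsChannel W' ∧ avgDist d p W' ≤ D ∧
      ∑ z : X × Xh, |p z.1 * W' z.1 z.2 - p z.1 * W z.1 z.2|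
        ≤ 2 * dstar * (∑ x, |p x - q x|) / dtil := by
  classical
  set t := ∑ x, |p x - q x| with htdef
  set D' := D + dstar * t with hD'def
  have hD'pos : 0 < D' := by
    have : 0 < dstar * t := mul_pos hdstar_pos ht0
    linarith
  set l := dstar * t / D' with hldef
  have hl0 : 0 ≤ l := by positivity
  have hl1 : l ≤ 1 := by
    rw [hldef, div_le_one hD'pos]; linarith
  have hlD' : l * D' = dstar * t := by
    rw [hldef]; field_simp
  choose y0 hy0 using hzero
  set Z : X → ℝ := fun x => ∑ y, (if d x y = 0 then 0 else W x y) with hZdef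
  have hZ0 : ∀ x, 0 ≤ Z x := fun x =>
    Finset.sum_nonneg (fun y _ => by split <;> [exact le_refl 0; exact hW.1 x y])
  set W' : X → Xh → ℝ := fun x y =>
    W x y - (if d x y = 0 then 0 else l * W x y) + (if y = y0 x then l * Z x else 0)
    with hW'def
  have hiteZ : ∀ x, ∑ y, (if d x y = 0 then 0 else l * W x y) = l * Z x := by
    intro x
    rw [hZdef, Finset.mul_sum]
    congr 1; funext y
    split <;> simp
  have hitey0 : ∀ (x : X) (c : ℝ), ∑ y, (if y = y0 x then c else 0) = c := by
    intro x c
    rw [Finset.sum_ite_eq' Finset.univ (y0 x) (fun _ => c)]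
    simp
  have hW'channel : IsChannel W' := by
    constructor
    · intro x y
      simp only [hW'def]
      by_cases hdy : d x y = 0
      · rw [if_pos hdy]
        rcases eq_or_ne y (y0 x) with h | h
        · rw [if_pos h]
          have h1 := mul_nonneg hl0 (hZ0 x)
          have h2 := hW.1 x y
          linarith
        · rw [if_neg h]
          have h2 := hW.1 x y
          linarith
      · have hyney0 : y ≠ y0 x := by
          intro h; rw [h] at hdy; exact hdy (hy0 x)
        rw [if_neg hdy, if_neg hyney0]
        have h2 := hW.1 x y
        nlinarith [mul_nonneg (sub_nonneg.2 hl1) h2]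
    · intro x
      simp only [hW'def]
      rw [Finset.sum_add_distrib, Finset.sum_sub_distrib, hiteZ x, hitey0 x (l * Z x), hW.2 x]
      ring
  have havg_identity : avgDist d p W' = (1 - l) * avgDist d p W := by
    rw [avgDist, avgDist, Finset.mul_sum]
    congr 1; funext x
    rw [Finset.mul_sum]
    congr 1; funext y
    by_cases hdy : d x y = 0
    · rw [hdy]; ring
    · have hyney0 : y ≠ y0 x := by
        intro h; rw [h] at hdy; exact hdy (hy0 x)
      simp only [hW'def]
      rw [if_neg hdy, if_neg hyney0]
      ring
  have hinner : ∀ x, 0 ≤ ∑ y, W x y * d x y ∧ ∑ y, W x y * d x y ≤ dstar := by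
    intro x
    constructor
    · exact Finset.sum_nonneg (fun y _ => mul_nonneg (hW.1 x y) (hd0 x y))
    · calc ∑ y, W x y * d x y ≤ ∑ y, W x y * dstar :=
          Finset.sum_le_sum (fun y _ => mul_le_mul_of_nonneg_left (hdstar x y) (hW.1 x y))
        _ = dstar := by rw [← Finset.sum_mul, hW.2 x, one_mul]
  have havgp_le : avgDist d p W ≤ D' := by
    have hdiff : avgDist d p W - avgDist d q W ≤ dstar * t := by
      rw [avgDist, avgDist, ← Finset.sum_sub_distrib]
      have : ∀ x, (∑ y, p x * W x y * d x y) - (∑ y, q x * W x y * d x y)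
          = (p x - q x) * ∑ y, W x y * d x y := by
        intro x
        rw [Finset.mul_sum, ← Finset.sum_sub_distrib]
        congr 1; funext y; ring
      rw [Finset.sum_congr rfl (fun x _ => this x)]
      calc ∑ x, (p x - q x) * ∑ y, W x y * d x y
          ≤ ∑ x, |p x - q x| * dstar := by
            apply Finset.sum_le_sum
            intro x _
            calc (p x - q x) * ∑ y, W x y * d x y
                ≤ |p x - q x| * ∑ y, W x y * d x y :=
                  mul_le_mul_of_nonneg_right (le_abs_self _) (hinner x).1
              _ ≤ |p x - q x| * dstar :=
                  mul_le_mul_of_nonneg_left (hinner x).2 (abs_nonneg _)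
        _ = t * dstar := by rw [← Finset.sum_mul]
        _ = dstar * t := by ring
    linarith
  have havg_le : avgDist d p W' ≤ D := by
    rw [havg_identity]
    calc (1 - l) * avgDist d p W ≤ (1 - l) * D' :=
        mul_le_mul_of_nonneg_left havgp_le (by linarith)
      _ = D' - l * D' := by ring
      _ = D := by rw [hlD']; rw [hD'def]; ring
  have hrowTV : ∀ x, ∑ y, |W' x y - W x y| = 2 * l * Z x := by
    intro x
    have hper : ∀ y, |W' x y - W x y|
        = (if y = y0 x then l * Z x else 0) + (if d x y = 0 then 0 else l * W x y) := by
      intro y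
      simp only [hW'def]
      by_cases hyy : y = y0 x
      · have hdy : d x y = 0 := by rw [hyy]; exact hy0 x
        rw [if_pos hyy, if_pos hdy]
        rw [show W x y - 0 + l * Z x - W x y = l * Z x by ring]
        rw [abs_of_nonneg (mul_nonneg hl0 (hZ0 x))]
        ring
      · rw [if_neg hyy]
        by_cases hdy : d x y = 0
        · rw [if_pos hdy]
          simp
        · rw [if_neg hdy]
          rw [show W x y - l * W x y + 0 - W x y = -(l * W x y) by ring]
          rw [abs_neg, abs_of_nonneg (mul_nonneg hl0 (hW.1 x y))]
          ring
    rw [Finset.sum_congr rfl (fun y _ => hper y), Finset.sum_add_distrib,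
      hitey0 x (l * Z x), hiteZ x]
    ring
  have hjointTV : ∑ z : X × Xh, |p z.1 * W' z.1 z.2 - p z.1 * W z.1 z.2|
      = 2 * l * ∑ x, p x * Z x := by
    rw [Fintype.sum_prod_type]
    have : ∀ x, ∑ y, |p x * W' x y - p x * W x y| = p x * (2 * l * Z x) := by
      intro x
      rw [← hrowTV x, Finset.mul_sum]
      congr 1; funext y
      rw [show p x * W' x y - p x * W x y = p x * (W' x y - W x y) by ring,
        abs_mul, abs_of_nonneg (hp.1 x)]
    rw [Finset.sum_congr rfl (fun x _ => this x), Finset.mul_sum]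
    congr 1; funext x; ring
  have hZsum : dtil * ∑ x, p x * Z x ≤ avgDist d p W := by
    rw [avgDist, Finset.mul_sum]
    apply Finset.sum_le_sum
    intro x _
    rw [hZdef]
    simp only
    rw [Finset.mul_sum, Finset.mul_sum]
    apply Finset.sum_le_sum
    intro y _
    by_cases hdy : d x y = 0
    · rw [if_pos hdy, hdy]
      simp
    · rw [if_neg hdy]
      have h1 := hdtil x y hdy
      have h2 := hW.1 x y
      have h3 := hp.1 x
      nlinarith [mul_nonneg (mul_nonneg h3 h2) (sub_nonneg.2 h1)]
  refine ⟨W', hW'channel, havg_le, ?_⟩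
  rw [hjointTV]
  have hpZ : ∑ x, p x * Z x ≤ D' / dtil := by
    rw [le_div_iff₀ hdtil_pos]
    calc (∑ x, p x * Z x) * dtil = dtil * ∑ x, p x * Z x := by ring
      _ ≤ avgDist d p W := hZsum
      _ ≤ D' := havgp_le
  calc 2 * l * ∑ x, p x * Z x ≤ 2 * l * (D' / dtil) := by
        apply mul_le_mul_of_nonneg_left hpZ (by positivity)
    _ = 2 * (l * D') / dtil := by ring
    _ = 2 * dstar * t / dtil := by rw [hlD']; ring

section RDlemmas
variable {X Xh : Type*} [Fintype X] [Fintype Xh] [DecidableEq Xh]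

-- deterministic channel
lemma det_channel (f : X → Xh) :
    IsChannel (fun x y => if y = f x then (1:ℝ) else 0) := by
  constructor
  · intro x y; simp only; split <;> norm_num
  · intro x
    rw [Finset.sum_ite_eq' Finset.univ (f x) (fun _ => (1:ℝ))]
    simp

lemma det_avg_zero (d : X → Xh → ℝ) (p : X → ℝ) (f : X → Xh) (hf : ∀ x, d x (f x) = 0) :
    avgDist d p (fun x y => if y = f x then (1:ℝ) else 0) = 0 := by
  rw [avgDist]
  apply Finset.sum_eq_zero
  intro x _
  apply Finset.sum_eq_zero
  intro y _
  by_cases h : y = f x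
  · rw [h, hf x, mul_zero]
  · rw [if_neg h, mul_zero, zero_mul]

lemma RD_nonempty (d : X → Xh → ℝ) (p : X → ℝ) (D : ℝ) (hD : 0 ≤ D)
    (hzero : ∀ x, ∃ y, d x y = 0) :
    {r | ∃ W : X → Xh → ℝ, IsChannel W ∧ avgDist d p W ≤ D ∧ r = mutInfo p W}.Nonempty := by
  choose y0 hy0 using hzero
  exact ⟨mutInfo p (fun x y => if y = y0 x then (1:ℝ) else 0),
    ⟨_, det_channel y0, by rw [det_avg_zero d p y0 hy0]; exact hD, rfl⟩⟩

lemma RD_bddBelow (d : X → Xh → ℝ) (p : X → ℝ) (hp : IsPMF p) (D : ℝ) :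
    BddBelow {r | ∃ W : X → Xh → ℝ, IsChannel W ∧ avgDist d p W ≤ D ∧ r = mutInfo p W} := by
  refine ⟨0, fun r hr => ?_⟩
  obtain ⟨W, hW, _, rfl⟩ := hr
  exact mutInfo_nonneg hp hW

lemma RD_nonneg (d : X → Xh → ℝ) (p : X → ℝ) (hp : IsPMF p) (D : ℝ) (hD : 0 ≤ D)
    (hzero : ∀ x, ∃ y, d x y = 0) : 0 ≤ RD d p D :=
  le_csInf (RD_nonempty d p D hD hzero) (fun r hr => by
    obtain ⟨W, hW, _, rfl⟩ := hr; exact mutInfo_nonneg hp hW)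

-- degenerate case: d identically zero
lemma RD_zero_of_d_zero (d : X → Xh → ℝ) (p : X → ℝ) (hp : IsPMF p) (D : ℝ) (hD : 0 ≤ D)
    [Nonempty Xh] (hall : ∀ x y, d x y = 0) : RD d p D = 0 := by
  set yc := Classical.arbitrary Xh
  set W0 : X → Xh → ℝ := fun x y => if y = yc then (1:ℝ) else 0 with hW0
  have hch : IsChannel W0 := det_channel (fun _ => yc)
  have havg : avgDist d p W0 = 0 := det_avg_zero d p (fun _ => yc) (fun x => hall x yc)
  have hmut : mutInfo p W0 = 0 := by
    rw [mutInfo]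
    have hm : (fun y => ∑ x, p x * W0 x y) = fun y => if y = yc then (1:ℝ) else 0 := by
      funext y
      by_cases h : y = yc
      · rw [if_pos h]
        calc ∑ x, p x * W0 x y = ∑ x, p x := by
              apply Finset.sum_congr rfl
              intro x _
              rw [hW0]; simp only; rw [if_pos h, mul_one]
          _ = 1 := hp.2
      · rw [if_neg h]
        apply Finset.sum_eq_zero
        intro x _
        rw [hW0]; simp only; rw [if_neg h, mul_zero]
    have hentm : ent (fun y => if y = yc then (1:ℝ) else 0) = 0 := by
      rw [ent, Finset.sum_eq_zero, neg_zero]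
      intro y _
      by_cases h : y = yc
      · rw [if_pos h]; simp
      · rw [if_neg h]; simp
    have hentj : ent (fun z : X × Xh => p z.1 * W0 z.1 z.2) = ent p := by
      rw [ent, ent, Fintype.sum_prod_type]
      congr 1
      apply Finset.sum_congr rfl
      intro x _
      calc ∑ y, p x * W0 x y * Real.log (p x * W0 x y)
          = ∑ y, (if y = yc then p x * Real.log (p x) else 0) := by
            apply Finset.sum_congr rfl
            intro y _
            by_cases h : y = yc
            · rw [if_pos h, hW0]; simp only; rw [if_pos h, mul_one]
            · rw [if_neg h, hW0]; simp only; rw [if_neg h, mul_zero, zero_mul]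
        _ = p x * Real.log (p x) := by
            rw [Finset.sum_ite_eq' Finset.univ yc (fun _ => p x * Real.log (p x))]
            simp
    rw [hm, hentm, hentj]
    ring
  apply le_antisymm
  · exact csInf_le (RD_bddBelow d p hp D) ⟨W0, hch, by rw [havg]; exact hD, hmut.symm⟩
  · exact RD_nonneg d p hp D hD (fun x => ⟨yc, hall x yc⟩)

end RDlemmas

lemma arith_final {t dstar dtil cX cXh : ℝ}
    (ht0 : 0 < t) (hdtil : 0 < dtil) (hdd : dtil ≤ dstar)
    (h1 : t ≤ dtil / (4 * dstar)) (hcX : 2 ≤ cX) (hcXh : 1 ≤ cXh) :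
    t * Real.log (cX / t) + t * Real.log (cXh / t) + t * Real.log (cX * cXh / t)
      + ((2 * dstar * t / dtil) * Real.log (cXh / (2 * dstar * t / dtil))
        + (2 * dstar * t / dtil) * Real.log (cX * cXh / (2 * dstar * t / dtil)))
      ≤ (7 * dstar / dtil) * t * Real.log (cX * cXh / t) := by
  have hds0 : 0 < dstar := lt_of_lt_of_le hdtil hdd
  set s := 2 * dstar * t / dtil with hsdef
  have hs0 : 0 < s := by positivity
  have hts : t ≤ s := by
    rw [hsdef, le_div_iff₀ hdtil]
    nlinarith
  set M := cX * cXh with hMdef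
  have hM2 : 2 ≤ M := by nlinarith
  set L := Real.log (M / t) with hLdef
  have hL0 : 0 ≤ L := by
    rw [hLdef]
    apply Real.log_nonneg
    rw [le_div_iff₀ ht0]
    have ht14 : t ≤ 1/4 := by
      have h4 : dtil / (4 * dstar) ≤ 1/4 := by
        rw [div_le_div_iff₀ (by positivity) (by norm_num)]
        nlinarith
      linarith
    nlinarith
  have hcXM : cX ≤ M := by nlinarith
  have hcXhM : cXh ≤ M := by nlinarith
  have hM0 : (0:ℝ) ≤ M := by nlinarith
  have hlog1 : Real.log (cX / t) ≤ L := by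
    rw [hLdef]
    apply Real.log_le_log (by positivity)
    rw [div_le_div_iff₀ ht0 ht0]
    nlinarith [mul_le_mul_of_nonneg_right hcXM ht0.le]
  have hlog2 : Real.log (cXh / t) ≤ L := by
    rw [hLdef]
    apply Real.log_le_log (by positivity)
    rw [div_le_div_iff₀ ht0 ht0]
    nlinarith [mul_le_mul_of_nonneg_right hcXhM ht0.le]
  have hlog4 : Real.log (cXh / s) ≤ L := by
    rw [hLdef]
    apply Real.log_le_log (by positivity)
    rw [div_le_div_iff₀ hs0 ht0]
    nlinarith [mul_le_mul hcXhM hts ht0.le hM0]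
  have hlog5 : Real.log (M / s) ≤ L := by
    rw [hLdef]
    apply Real.log_le_log (by positivity)
    rw [div_le_div_iff₀ hs0 ht0]
    nlinarith [mul_le_mul_of_nonneg_left hts hM0]
  have e1 : t * Real.log (cX / t) ≤ t * L := mul_le_mul_of_nonneg_left hlog1 ht0.le
  have e2 : t * Real.log (cXh / t) ≤ t * L := mul_le_mul_of_nonneg_left hlog2 ht0.le
  have e3 : t * Real.log (M / t) = t * L := by rw [hLdef]
  have e4 : s * Real.log (cXh / s) ≤ s * L := mul_le_mul_of_nonneg_left hlog4 hs0.le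
  have e5 : s * Real.log (M / s) ≤ s * L := mul_le_mul_of_nonneg_left hlog5 hs0.le
  have hsL : s * L = 2 * (dstar / dtil) * (t * L) := by
    rw [hsdef]; field_simp
  have hK : 1 ≤ dstar / dtil := by rw [le_div_iff₀ hdtil]; linarith
  have htL : 0 ≤ t * L := mul_nonneg ht0.le hL0
  have hfin : 3 * (t * L) + 2 * (s * L) ≤ (7 * dstar / dtil) * t * L := by
    rw [hsL]
    have : (7 * dstar / dtil) * t * L = 7 * (dstar / dtil) * (t * L) := by ring
    rw [this]
    nlinarith [htL, hK]
  calc t * Real.log (cX / t) + t * Real.log (cXh / t) + t * Real.log (M / t)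
      + (s * Real.log (cXh / s) + s * Real.log (M / s))
      ≤ t * L + t * L + t * L + (s * L + s * L) := by
        rw [e3]; linarith [e1, e2, e4, e5]
    _ = 3 * (t * L) + 2 * (s * L) := by ring
    _ ≤ (7 * dstar / dtil) * t * L := hfin


lemma RD_one_sided {X Xh : Type*} [Fintype X] [Fintype Xh]
    (d : X → Xh → ℝ) (dstar dtil : ℝ)
    (hd0 : ∀ x y, 0 ≤ d x y) (hdstar : ∀ x y, d x y ≤ dstar)
    (hzero : ∀ x, ∃ y, d x y = 0)
    (hdtil_pos : 0 < dtil) (hdtil : ∀ x y, d x y ≠ 0 → dtil ≤ d x y)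
    (p q : X → ℝ) (hp : IsPMF p) (hq : IsPMF q)
    (h1 : ∑ x, |p x - q x| ≤ dtil / (4 * dstar))
    (D : ℝ) (hD : 0 ≤ D)
    (ht0 : 0 < ∑ x, |p x - q x|) (hne : ∃ x y, d x y ≠ 0)
    (hcX : 2 ≤ (Fintype.card X : ℝ)) (hcXh : 1 ≤ (Fintype.card Xh : ℝ)) :
    RD d p D ≤ RD d q D +
      (7 * dstar / dtil) * (∑ x, |p x - q x|) *
        Real.log ((Fintype.card X : ℝ) * (Fintype.card Xh : ℝ) / ∑ x, |p x - q x|) := by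
  classical
  obtain ⟨x1, y1, hne1⟩ := hne
  have hdd : dtil ≤ dstar := le_trans (hdtil x1 y1 hne1) (hdstar x1 y1)
  have hds0 : 0 < dstar := lt_of_lt_of_le hdtil_pos hdd
  set t := ∑ x, |p x - q x| with htdef
  set cX := (Fintype.card X : ℝ) with hcXdef
  set cXh := (Fintype.card Xh : ℝ) with hcXhdef
  set B := (7 * dstar / dtil) * t * Real.log (cX * cXh / t) with hBdef
  have ht14 : t ≤ 1/4 := by
    have h4 : dtil / (4 * dstar) ≤ 1/4 := by
      rw [div_le_div_iff₀ (by positivity) (by norm_num)]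
      nlinarith
    linarith
  have ht12 : t ≤ 1/2 := by linarith
  set s := 2 * dstar * t / dtil with hsdef
  have hs0 : 0 < s := by positivity
  have hs12 : s ≤ 1/2 := by
    rw [hsdef, div_le_iff₀ hdtil_pos]
    have h1' : t * (4 * dstar) ≤ dtil := by
      rw [← le_div_iff₀ (by positivity)]
      exact h1
    nlinarith
  have key : ∀ r ∈ {r | ∃ W : X → Xh → ℝ, IsChannel W ∧ avgDist d q W ≤ D ∧ r = mutInfo q W},
      RD d p D ≤ r + B := by
    intro r hr
    obtain ⟨W, hWch, hWfeas, rfl⟩ := hr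
    obtain ⟨W', hW'ch, hW'feas, hW'TV⟩ := construct d dstar dtil hd0 hdstar hzero hdtil_pos
      hdtil p q hp hq D hD W hWch hWfeas ht0 hds0
    have hRDle : RD d p D ≤ mutInfo p W' :=
      csInf_le (RD_bddBelow d p hp D) ⟨W', hW'ch, hW'feas, rfl⟩
    have hc1 := mutInfo_cont_p hp hq hWch (le_refl t) ht0 ht12
    have hc2 := mutInfo_cont_W hp hWch hW'ch hW'TV hs0 hs12
    rw [← hcXdef, ← hcXhdef] at hc1 hc2
    rw [← htdef] at hc2
    have harith := arith_final ht0 hdtil_pos hdd h1 hcX hcXh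
    rw [← hsdef] at hc2 harith
    have ha1 := (abs_le.mp hc1).2
    have ha2 := (abs_le.mp hc2).2
    rw [hBdef]
    have hfin : mutInfo p W' ≤ mutInfo q W
        + (t * Real.log (cX / t) + t * Real.log (cXh / t) + t * Real.log (cX * cXh / t)
          + (s * Real.log (cXh / s) + s * Real.log (cX * cXh / s))) := by linarith
    calc RD d p D ≤ mutInfo p W' := hRDle
      _ ≤ mutInfo q W + (t * Real.log (cX / t) + t * Real.log (cXh / t)
            + t * Real.log (cX * cXh / t)
            + (s * Real.log (cXh / s) + s * Real.log (cX * cXh / s))) := hfin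
      _ ≤ mutInfo q W + (7 * dstar / dtil) * t * Real.log (cX * cXh / t) := by
          linarith [harith]
  have hq_ne := RD_nonempty d q D hD hzero
  have hle : RD d p D - B ≤ RD d q D :=
    le_csInf hq_ne (fun r hr => by linarith [key r hr])
  linarith

/-- Uniform continuity of `R(p,D)` in `p` (Lemma: zero-in-every-row distortion):
if `‖p-q‖₁ ≤ d̃/(4d*)` then
`|R(p,D) - R(q,D)| ≤ (7d*/d̃) · ‖p-q‖₁ · ln(|X|·|X̂| / ‖p-q‖₁)`. -/
theorem stmt8 {X Xh : Type*} [Fintype X] [Fintype Xh]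
    (d : X → Xh → ℝ) (dstar dtil : ℝ)
    (hd0 : ∀ x y, 0 ≤ d x y) (hdstar : ∀ x y, d x y ≤ dstar)
    (hzero : ∀ x, ∃ y, d x y = 0)
    (hdtil_pos : 0 < dtil) (hdtil : ∀ x y, d x y ≠ 0 → dtil ≤ d x y)
    (p q : X → ℝ) (hp : IsPMF p) (hq : IsPMF q)
    (h1 : ∑ x, |p x - q x| ≤ dtil / (4 * dstar))
    (D : ℝ) (hD : 0 ≤ D) :
    |RD d p D - RD d q D| ≤
      (7 * dstar / dtil) * (∑ x, |p x - q x|) *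
        Real.log ((Fintype.card X : ℝ) * (Fintype.card Xh : ℝ) / ∑ x, |p x - q x|) := by
  classical
  have hXne : Nonempty X := by
    by_contra h
    rw [not_nonempty_iff] at h
    have := hp.2
    rw [Finset.sum_eq_zero (fun x _ => (h.elim x))] at this
    norm_num at this
  have hXhne : Nonempty Xh := ⟨(hzero (Classical.arbitrary X)).choose⟩
  have hcXh1 : 1 ≤ (Fintype.card Xh : ℝ) := by
    have := Fintype.card_pos (α := Xh)
    exact_mod_cast this
  have htnn : 0 ≤ ∑ x, |p x - q x| :=
    Finset.sum_nonneg (fun x _ => abs_nonneg _)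
  rcases eq_or_lt_of_le htnn with h0 | ht0
  · -- p = q
    have hz := (Finset.sum_eq_zero_iff_of_nonneg
      (s := Finset.univ) (f := fun x => |p x - q x|)
      (fun x _ => abs_nonneg _)).mp h0.symm
    have hpq : p = q := by
      funext x
      have := hz x (Finset.mem_univ x)
      have := abs_eq_zero.mp this
      linarith
    rw [hpq]
    simp
  · have hds_nonneg : 0 ≤ dstar := by
      obtain ⟨x0⟩ := hXne
      obtain ⟨y0, _⟩ := hzero x0
      exact le_trans (hd0 x0 y0) (hdstar x0 y0)
    have hds0 : 0 < dstar := by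
      rcases eq_or_lt_of_le hds_nonneg with h | h
      · exfalso
        rw [← h] at h1
        norm_num at h1
        linarith
      · exact h
    have hcX2 : 2 ≤ (Fintype.card X : ℝ) := by
      by_contra hlt
      push_neg at hlt
      have hc1 : Fintype.card X = 1 := by
        have hpos := Fintype.card_pos (α := X)
        have : Fintype.card X < 2 := by exact_mod_cast hlt
        omega
      obtain ⟨x0, hx0⟩ := Fintype.card_eq_one_iff.mp hc1
      have huniv : (Finset.univ : Finset X) = {x0} :=
        Finset.eq_singleton_iff_unique_mem.mpr ⟨Finset.mem_univ x0, fun w _ => hx0 w⟩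
      have hp1 := hp.2
      have hq1 := hq.2
      rw [huniv, Finset.sum_singleton] at hp1 hq1
      rw [huniv, Finset.sum_singleton, hp1, hq1] at ht0
      norm_num at ht0
    by_cases hall : ∀ x y, d x y = 0
    · rw [RD_zero_of_d_zero d p hp D hD hall, RD_zero_of_d_zero d q hq D hD hall]
      rw [sub_self, abs_zero]
      apply mul_nonneg (mul_nonneg (by positivity) htnn)
      apply Real.log_nonneg
      have ht2 : ∑ x, |p x - q x| ≤ 2 := by
        calc ∑ x, |p x - q x| ≤ ∑ x, (p x + q x) := by
              apply Finset.sum_le_sum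
              intro x _
              have h1' := hp.1 x
              have h2' := hq.1 x
              rw [abs_le]
              constructor <;> linarith [abs_nonneg (p x - q x)]
          _ = 2 := by rw [Finset.sum_add_distrib, hp.2, hq.2]; norm_num
      rw [le_div_iff₀ ht0]
      nlinarith
    · push_neg at hall
      have hsymm : ∑ x, |q x - p x| = ∑ x, |p x - q x| :=
        Finset.sum_congr rfl (fun x _ => abs_sub_comm _ _)
      have hone := RD_one_sided d dstar dtil hd0 hdstar hzero hdtil_pos hdtil p q hp hq h1
        D hD ht0 hall hcX2 hcXh1
      have htwo := RD_one_sided d dstar dtil hd0 hdstar hzero hdtil_pos hdtil q p hq hp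
        (by rw [hsymm]; exact h1) D hD (by rw [hsymm]; exact ht0) hall hcX2 hcXh1
      rw [hsymm] at htwo
      rw [abs_sub_le_iff]
      exact ⟨by linarith, by linarith⟩
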